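/- Suppose Assumptions 1 and 2 hold, β ∈ (0,1), λ ≥ 1, λ < λ̄, and additionally lim_{K→0⁺} F(K,1)/K = ∞ (Inada condition at zero). Then for every z̄ with Φ(z̄) > 1 − 1/λ, there exists a unique K > 0 satisfying K·(1 − β(λΦ(z̄) + 1 − λ)) = βλ·F(K,1)·∫_{z̄}^∞ z dΦ(z). (Lemma: unique steady-state capital for each investment threshold.) -/

import Mathlib

open Filter Topology MeasureTheory

/-- **Assumption 1.** `Φ` (the law `μ` of productivity) is an absolutely continuous
cdf on `[0,∞)` with `Φ(z) < 1` for all `z` and a finite mean. -/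
structure Assumption1 (μ : Measure ℝ) : Prop where
  prob : IsProbabilityMeasure μ
  supp : μ (Set.Iio 0) = 0
  absCont : μ ≪ MeasureTheory.volume
  lt_one : ∀ z : ℝ, μ (Set.Iic z) < 1
  finite_mean : Integrable id μ

/-- The cdf `Φ` of the productivity distribution `μ`. -/
noncomputable def Phi (μ : Measure ℝ) (z : ℝ) : ℝ := (μ (Set.Iic z)).toReal

/-- **Assumption 2.** `F` is homogeneous of degree one, concave, continuously
differentiable with positive marginal products `FK`, `FX`, and
`F(K,1)/K → m`, `F_K(K,1) → m` as `K → ∞` with `m > 0`. -/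
structure Assumption2 (F FK FX : ℝ → ℝ → ℝ) (m : ℝ) : Prop where
  pos : ∀ K X : ℝ, 0 < K → 0 < X → 0 < F K X
  homog : ∀ c K X : ℝ, 0 < c → 0 < K → 0 < X → F (c * K) (c * X) = c * F K X
  concave : ConcaveOn ℝ (Set.Ioi 0 ×ˢ Set.Ioi 0) (fun p : ℝ × ℝ => F p.1 p.2)
  hFK : ∀ K X : ℝ, 0 < K → 0 < X → HasDerivAt (fun k => F k X) (FK K X) K
  hFX : ∀ K X : ℝ, 0 < K → 0 < X → HasDerivAt (fun x => F K x) (FX K X) X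
  FK_pos : ∀ K X : ℝ, 0 < K → 0 < X → 0 < FK K X
  FX_pos : ∀ K X : ℝ, 0 < K → 0 < X → 0 < FX K X
  FK_cont : ContinuousOn (fun p : ℝ × ℝ => FK p.1 p.2) (Set.Ioi 0 ×ˢ Set.Ioi 0)
  FX_cont : ContinuousOn (fun p : ℝ × ℝ => FX p.1 p.2) (Set.Ioi 0 ×ˢ Set.Ioi 0)
  m_pos : 0 < m
  lim_avg : Filter.Tendsto (fun K => F K 1 / K) Filter.atTop (nhds m)
  lim_FK : Filter.Tendsto (fun K => FK K 1) Filter.atTop (nhds m)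

/-- The leverage threshold `λ̄ = ((1−β)/β)·(∫ max{mz−1, 0} dΦ(z))⁻¹`. -/
noncomputable def lamBar (β m : ℝ) (μ : Measure ℝ) : ℝ :=
  ((1 - β) / β) * (∫ z, max (m * z - 1) 0 ∂μ)⁻¹

/-- Aggregate wealth `W(K, z̄)` as a function of capital and the investment threshold. -/
noncomputable def Wfun (μ : Measure ℝ) (β lam : ℝ) (F : ℝ → ℝ → ℝ) (K zb : ℝ) : ℝ :=
  F K 1 / (1 - β * (lam * Phi μ zb + 1 - lam))

/-- Land price `P(K, z̄)` as a function of capital and the investment threshold. -/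
noncomputable def Pfun (μ : Measure ℝ) (β lam : ℝ) (F : ℝ → ℝ → ℝ) (K zb : ℝ) : ℝ :=
  β * (lam * Phi μ zb + 1 - lam) * F K 1 / (1 - β * (lam * Phi μ zb + 1 - lam))

/-- **Lemma (unique steady-state capital).** Under Assumptions 1 and 2, `β ∈ (0,1)`,
`1 ≤ λ < λ̄`, and the Inada condition at zero, for every threshold `z̄` with
`Φ(z̄) > 1 − 1/λ` there is a unique `K > 0` solving the steady-state capital equation. -/
theorem unique_steady_state_capital
    (μ : Measure ℝ) (hμ : Assumption1 μ)
    (F FK FX : ℝ → ℝ → ℝ) (m : ℝ) (hF : Assumption2 F FK FX m)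
    (β lam : ℝ) (hβ : β ∈ Set.Ioo (0 : ℝ) 1) (hlam : 1 ≤ lam)
    (hlt : lam < lamBar β m μ)
    (hInada : Tendsto (fun K => F K 1 / K) (nhdsWithin 0 (Set.Ioi 0)) atTop) :
    ∀ zb : ℝ, 1 - 1 / lam < Phi μ zb →
      ∃! K : ℝ, 0 < K ∧
        K * (1 - β * (lam * Phi μ zb + 1 - lam)) =
          β * lam * F K 1 * ∫ z in Set.Ioi zb, z ∂μ := by
  intro zb hzb
  obtain ⟨hβ0, hβ1⟩ := hβ
  have hprob := hμ.prob
  have hid : Integrable (fun z : ℝ => z) μ := hμ.finite_mean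
  have hlam0 : (0:ℝ) < lam := lt_of_lt_of_le one_pos hlam
  -- Phi bounds
  have hPhi_lt1 : Phi μ zb < 1 := by
    have := (ENNReal.toReal_lt_toReal (ne_top_of_lt (hμ.lt_one zb)) (by simp)).2 (hμ.lt_one zb)
    simpa [Phi] using this
  have hPhi_nonneg : 0 ≤ Phi μ zb := ENNReal.toReal_nonneg
  set c : ℝ := 1 - β * (lam * Phi μ zb + 1 - lam) with hc_def
  have hp_pos : 0 < lam * Phi μ zb + 1 - lam := by
    have h := mul_lt_mul_of_pos_left hzb hlam0
    rw [mul_sub, mul_one_div, div_self hlam0.ne'] at h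
    linarith
  have hp_lt1 : lam * Phi μ zb + 1 - lam < 1 := by
    have := mul_lt_mul_of_pos_left hPhi_lt1 hlam0
    linarith
  have hc_pos : 0 < c := by
    have : β * (lam * Phi μ zb + 1 - lam) < 1 := by nlinarith
    simpa [hc_def] using by linarith
  -- a.e. nonneg
  have hae : ∀ᵐ z ∂μ, (0:ℝ) ≤ z := by
    rw [ae_iff]
    convert hμ.supp using 2
    ext z; simp [not_le, Set.mem_Iio]
  set J : ℝ := ∫ z in Set.Ioi zb, z ∂μ with hJ_def
  -- J positive
  set t : ℝ := max zb 0 + 1 with ht_def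
  have ht_pos : 0 < t := by positivity
  have ht_gt : zb < t := lt_of_le_of_lt (le_max_left _ _) (by linarith)
  have hIoi_pos : 0 < μ (Set.Ioi t) := by
    have hcompl : μ (Set.Ioi t) = 1 - μ (Set.Iic t) := by
      rw [← Set.compl_Iic, measure_compl measurableSet_Iic (measure_ne_top μ _)]
      simp
    rw [hcompl]
    exact tsub_pos_iff_lt.2 (hμ.lt_one t)
  have hJt : (t * (μ (Set.Ioi t)).toReal) ≤ ∫ z in Set.Ioi t, z ∂μ := by
    have h1 : ∫ _z in Set.Ioi t, t ∂μ = (μ (Set.Ioi t)).toReal * t := by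
      rw [setIntegral_const]; simp [smul_eq_mul, Measure.real]
    have h2 : ∫ _z in Set.Ioi t, t ∂μ ≤ ∫ z in Set.Ioi t, z ∂μ := by
      refine setIntegral_mono_on (integrableOn_const (measure_ne_top μ _))
        hid.integrableOn measurableSet_Ioi ?_
      intro x hx; exact (le_of_lt hx)
    rw [h1] at h2; linarith
  have hJ_mono : ∫ z in Set.Ioi t, z ∂μ ≤ J := by
    refine setIntegral_mono_set hid.integrableOn
      (ae_restrict_of_ae hae) ?_
    exact HasSubset.Subset.eventuallyLE (Set.Ioi_subset_Ioi ht_gt.le)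
  have hJ_pos : 0 < J := by
    have htoReal : 0 < (μ (Set.Ioi t)).toReal :=
      ENNReal.toReal_pos hIoi_pos.ne' (measure_ne_top μ _)
    nlinarith
  set d : ℝ := β * lam * J with hd_def
  have hd_pos : 0 < d := by positivity
  -- the max integral
  set I : ℝ := ∫ z, max (m * z - 1) 0 ∂μ with hI_def
  have hI_int : Integrable (fun z => max (m * z - 1) 0) μ := by
    refine Integrable.mono' (hid.abs.const_mul m) ?_ ?_
    · exact (((continuous_const.mul continuous_id).sub continuous_const).max
        continuous_const).aestronglyMeasurable
    · filter_upwards [hae] with z hz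
      rw [Real.norm_eq_abs, abs_of_nonneg (le_max_right _ _)]
      have hm := hF.m_pos
      have : m * z - 1 ≤ m * |id z| := by
        simp only [id, abs_of_nonneg hz]; linarith
      exact max_le this (by positivity)
  have hI_nonneg : 0 ≤ I := integral_nonneg (fun z => le_max_right _ _)
  have hβlamI : β * lam * I < 1 - β := by
    rcases eq_or_lt_of_le hI_nonneg with h0 | hIpos
    · exfalso
      rw [lamBar] at hlt
      rw [← hI_def, ← h0] at hlt
      simp at hlt
      linarith
    · have h := hlt
      rw [lamBar, ← div_eq_mul_inv] at h
      have h2 : lam * I < (1 - β) / β := (lt_div_iff₀ hIpos).1 h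
      have h3 : lam * I * β < 1 - β := (lt_div_iff₀ hβ0).1 h2
      linarith
  -- μ(Ioi zb) in reals
  have hμIoi : (μ (Set.Ioi zb)).toReal = 1 - Phi μ zb := by
    have hcompl : μ (Set.Ioi zb) = 1 - μ (Set.Iic zb) := by
      rw [← Set.compl_Iic, measure_compl measurableSet_Iic (measure_ne_top μ _)]
      simp
    rw [hcompl, ENNReal.toReal_sub_of_le (hμ.lt_one zb).le (by simp)]
    simp [Phi]
  -- key inequality m*J ≤ I + (1 - Phi)
  have hmz_int : IntegrableOn (fun z => m * z - 1) (Set.Ioi zb) μ :=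
    ((hid.const_mul m).sub (integrable_const 1)).integrableOn
  have hsplit : ∫ z in Set.Ioi zb, (m * z - 1) ∂μ = m * J - (1 - Phi μ zb) := by
    rw [integral_sub ((hid.const_mul m).integrableOn)
      ((integrable_const 1).integrableOn)]
    rw [MeasureTheory.integral_const_mul, setIntegral_const, Measure.real, hμIoi]
    simp [hJ_def, smul_eq_mul]
  have hle1 : ∫ z in Set.Ioi zb, (m * z - 1) ∂μ ≤ ∫ z in Set.Ioi zb, max (m * z - 1) 0 ∂μ := by
    refine integral_mono hmz_int hI_int.integrableOn ?_
    intro z; exact le_max_left _ _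
  have hle2 : ∫ z in Set.Ioi zb, max (m * z - 1) 0 ∂μ ≤ I :=
    setIntegral_le_integral hI_int (Filter.Eventually.of_forall fun z => le_max_right _ _)
  have hmJ_le : m * J ≤ I + (1 - Phi μ zb) := by
    have := hsplit ▸ (hle1.trans hle2)
    linarith
  have hkey : m * d < c := by
    have hβlam : (0:ℝ) < β * lam := by positivity
    have h1 : β * lam * (m * J) ≤ β * lam * (I + (1 - Phi μ zb)) :=
      mul_le_mul_of_nonneg_left hmJ_le hβlam.le
    simp only [hd_def, hc_def]
    nlinarith
  set T : ℝ := c / d with hT_def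
  have hmT : m < T := (lt_div_iff₀ hd_pos).2 (by linarith)
  -- the average product g
  set g : ℝ → ℝ := fun K => F K 1 / K with hg_def
  have hcontg : ContinuousOn g (Set.Ioi 0) := by
    refine ContinuousOn.div ?_ continuousOn_id ?_
    · exact fun K hK => ((hF.hFK K 1 hK one_pos).continuousAt).continuousWithinAt
    · exact fun K hK => ne_of_gt hK
  have hhom : ∀ K : ℝ, 0 < K → g K = F 1 (1 / K) := by
    intro K hK
    have h := hF.homog K 1 (1 / K) hK one_pos (by positivity)
    rw [mul_one, mul_one_div, div_self hK.ne'] at h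
    simp only [hg_def]
    rw [h, mul_div_cancel_left₀ _ hK.ne']
  have hmonoX : StrictMonoOn (fun x => F 1 x) (Set.Ioi 0) := by
    apply strictMonoOn_of_deriv_pos (convex_Ioi 0)
    · exact fun x hx => ((hF.hFX 1 x one_pos hx).continuousAt).continuousWithinAt
    · intro x hx
      rw [interior_Ioi] at hx
      rw [(hF.hFX 1 x one_pos hx).deriv]
      exact hF.FX_pos 1 x one_pos hx
  have hganti : StrictAntiOn g (Set.Ioi 0) := by
    intro K1 hK1 K2 hK2 h12
    rw [hhom K1 hK1, hhom K2 hK2]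
    have h1 : (0:ℝ) < K1 := hK1
    have h2 : (0:ℝ) < K2 := hK2
    exact hmonoX (Set.mem_Ioi.2 (by positivity)) (Set.mem_Ioi.2 (by positivity))
      (one_div_lt_one_div_of_lt h1 h12)
  -- existence via IVT
  obtain ⟨a, haT, ha0⟩ :=
    ((hInada.eventually (eventually_gt_atTop T)).and eventually_mem_nhdsWithin).exists
  have ha0' : (0:ℝ) < a := ha0
  obtain ⟨b, hbT, hab⟩ :=
    ((hF.lim_avg.eventually_lt_const hmT).and (eventually_ge_atTop a)).exists
  have hsub : Set.Icc a b ⊆ Set.Ioi 0 := fun x hx => lt_of_lt_of_le ha0' hx.1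
  have hmem : T ∈ Set.Icc (g b) (g a) := ⟨hbT.le, haT.le⟩
  obtain ⟨K, hKmem, hgK⟩ := intermediate_value_Icc' hab (hcontg.mono hsub) hmem
  have hK0 : 0 < K := hsub hKmem
  refine ⟨K, ⟨hK0, ?_⟩, ?_⟩
  · have h := hgK
    simp only [hg_def, hT_def] at h
    rw [div_eq_div_iff hK0.ne' hd_pos.ne'] at h
    simp only [hd_def, hc_def] at h ⊢
    linear_combination -h
  · rintro K' ⟨hK'0, hK'eq⟩
    have hgK' : g K' = T := by
      simp only [hg_def, hT_def]
      rw [div_eq_div_iff hK'0.ne' hd_pos.ne']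
      simp only [hd_def, hc_def]
      linear_combination -hK'eq
    exact hganti.injOn (Set.mem_Ioi.2 hK'0) (Set.mem_Ioi.2 hK0) (hgK'.trans hgK.symm)
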